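/- Let π be a reverse plane partition of shape λ and h a rim-hook of λ. If P and P' are both π-compatible paths in λ with ω(P) = ω(P') = ω(h) and ℓ(P) = ℓ(P') = ℓ(h) such that π + P and π + P' are reverse plane partitions, then P = P'. (Uniqueness of the insertion path.) -/

import Mathlib

abbrev Cell := ℕ × ℕ

def nC (u : Cell) : Cell := (u.1 - 1, u.2)
def eC (u : Cell) : Cell := (u.1, u.2 + 1)
def sC (u : Cell) : Cell := (u.1 + 1, u.2)
def wC (u : Cell) : Cell := (u.1, u.2 - 1)
def seC (u : Cell) : Cell := (u.1 + 1, u.2 + 1)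

/-- `lam i` is the `i`-th part (1-indexed); weakly decreasing with finitely many nonzero parts. -/
def IsPartition (lam : ℕ → ℕ) : Prop :=
  (∀ i, lam (i + 1) ≤ lam i) ∧ (∃ N, ∀ i, N ≤ i → lam i = 0)

/-- The Young diagram of `lam`: cells `(i,j)` with `1 ≤ i`, `1 ≤ j ≤ lam i`. -/
def cells (lam : ℕ → ℕ) : Set Cell := {u | 1 ≤ u.1 ∧ 1 ≤ u.2 ∧ u.2 ≤ lam u.1}

/-- The conjugate partition. -/
noncomputable def conj (lam : ℕ → ℕ) (j : ℕ) : ℕ := {i | 1 ≤ i ∧ j ≤ lam i}.ncard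

def content (u : Cell) : ℤ := (u.2 : ℤ) - (u.1 : ℤ)

/-- Hook length of the cell `u = (i,j)`: `lam i + lam' j - i - j + 1`. -/
noncomputable def hookLen (lam : ℕ → ℕ) (u : Cell) : ℕ := lam u.1 + conj lam u.2 - u.1 - u.2 + 1

/-- A North-East path in `lam`. -/
def IsNEPath (lam : ℕ → ℕ) (P : List Cell) : Prop :=
  P ≠ [] ∧ (∀ u ∈ P, u ∈ cells lam) ∧ List.Chain' (fun u v => v = nC u ∨ v = eC u) P

/-- Head of a path. -/
def hd (P : List Cell) : Cell := P.headD (0, 0)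
/-- Tail (last cell) of a path. -/
def lst (P : List Cell) : Cell := P.getLastD (0, 0)
/-- Length of a path (number of steps). -/
def len (P : List Cell) : ℕ := P.length - 1

/-- A rim-hook of `lam`. -/
def IsRimHook (lam : ℕ → ℕ) (h : List Cell) : Prop :=
  IsNEPath lam h ∧ sC (hd h) ∉ cells lam ∧ eC (lst h) ∉ cells lam ∧
    ∀ u ∈ h, seC u ∉ cells lam

def IsOuterCorner (lam : ℕ → ℕ) (u : Cell) : Prop :=
  u ∈ cells lam ∧ eC u ∉ cells lam ∧ sC u ∉ cells lam

def IsInnerCorner (lam : ℕ → ℕ) (u : Cell) : Prop :=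
  u ∈ cells lam ∧ eC u ∈ cells lam ∧ sC u ∈ cells lam ∧ seC u ∉ cells lam

def IsCornerContent (lam : ℕ → ℕ) (z : ℤ) : Prop :=
  ∃ v, (IsInnerCorner lam v ∨ IsOuterCorner lam v) ∧ content v = z

/-- Cells whose content is the content of an inner corner. -/
def regionI (lam : ℕ → ℕ) : Set Cell :=
  {u ∈ cells lam | ∃ v, IsInnerCorner lam v ∧ content v = content u}

/-- Cells whose content is the content of an outer corner. -/
def regionO (lam : ℕ → ℕ) : Set Cell :=
  {u ∈ cells lam | ∃ v, IsOuterCorner lam v ∧ content v = content u}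

/-- Cells with `c(u) < o_1` or `i_k < c(u) < o_{k+1}`: the content is not a corner content
and the largest corner content below it (if any) is an inner-corner content. -/
def regionA (lam : ℕ → ℕ) : Set Cell :=
  {u ∈ cells lam | ¬ IsCornerContent lam (content u) ∧
    ∀ w, IsOuterCorner lam w → content w < content u →
      ∃ v, IsInnerCorner lam v ∧ content w < content v ∧ content v < content u}

/-- Cells with `o_k < c(u) < i_k` or `o_{r+1} < c(u)`: the remaining cells. -/
def regionB (lam : ℕ → ℕ) : Set Cell :=
  cells lam \ (regionI lam ∪ regionO lam ∪ regionA lam)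

/-- A reverse plane partition of shape `lam`, as a function vanishing outside `lam`
which is weakly increasing along rows and columns. -/
def IsRPP (lam : ℕ → ℕ) (π : Cell → ℕ) : Prop :=
  (∀ u, u ∉ cells lam → π u = 0) ∧
  (∀ u ∈ cells lam, eC u ∈ cells lam → π u ≤ π (eC u)) ∧
  (∀ u ∈ cells lam, sC u ∈ cells lam → π u ≤ π (sC u))

/-- `π + P`: increase by one along the path. -/
def addPath (π : Cell → ℕ) (P : List Cell) : Cell → ℕ :=
  fun u => if u ∈ P then π u + 1 else π u

/-- `π - P`: decrease by one along the path. -/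
def subPath (π : Cell → ℕ) (P : List Cell) : Cell → ℕ :=
  fun u => if u ∈ P then π u - 1 else π u

/-- The path `P` is `π`-compatible. -/
def Compatible (lam : ℕ → ℕ) (π : Cell → ℕ) (P : List Cell) : Prop :=
  (∀ u ∈ P, u ∈ regionI lam ∪ regionA lam → eC u ∈ P ∧ π (eC u) = π u) ∧
  (∀ u ∈ P, nC u ∈ P → π (nC u) = π u)

/-- `P` witnesses the insertion of the rim-hook `h` into `π`. -/
def InsertPath (lam : ℕ → ℕ) (π : Cell → ℕ) (h P : List Cell) : Prop :=
  IsNEPath lam P ∧ Compatible lam π P ∧ lst P = lst h ∧ len P = len h ∧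
    IsRPP lam (addPath π P)

/-- The rim-hook `h` inserts into `π`. -/
def Inserts (lam : ℕ → ℕ) (h : List Cell) (π : Cell → ℕ) : Prop :=
  ∃ P, InsertPath lam π h P

open Classical in
/-- `h * π`, the insertion of `h` into `π` (equal to `π` if `h` does not insert). -/
noncomputable def insertRH (lam : ℕ → ℕ) (h : List Cell) (π : Cell → ℕ) : Cell → ℕ :=
  if hP : Inserts lam h π then addPath π hP.choose else π

/-- `h₁ * h₂ * ⋯ * h_s * 0`. -/
noncomputable def insertList (lam : ℕ → ℕ) (hs : List (List Cell)) : Cell → ℕ :=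
  hs.foldr (insertRH lam) (fun _ => 0)

/-- Reverse lexicographic order on rim-hooks. -/
def RHle (f h : List Cell) : Prop :=
  content (hd h) < content (hd f) ∨
    (content (hd f) = content (hd h) ∧ content (lst f) ≤ content (lst h))

/-- Reverse lexicographic order on cells. -/
def revlexLE (u v : Cell) : Prop := v.2 < u.2 ∨ (u.2 = v.2 ∧ v.1 ≤ u.1)

/-- Content order on cells: `u ⊴ v`. -/
def contentLE (u v : Cell) : Prop :=
  content v < content u ∨ (content u = content v ∧ v.1 ≤ u.1)

/-- The set of candidates of `π`. -/
def candidates (lam : ℕ → ℕ) (π : Cell → ℕ) : Set Cell :=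
  {u ∈ regionO lam | π (wC u) < π u} ∪
    {u ∈ regionA lam | π (wC u) < π u ∧ π (nC u) < π u}

/-- One step of the path `Q(π,u)`. -/
def QStep (lam : ℕ → ℕ) (π : Cell → ℕ) (v v' : Cell) : Prop :=
  (v ∈ regionO lam ∪ regionB lam ∧ π (nC v) = π v ∧ v' = nC v) ∨
  ((v ∈ regionI lam ∪ regionA lam ∨ (π (nC v) < π v ∧ eC v ∈ cells lam)) ∧ v' = eC v)

/-- `P` is the path `Q(π,u)`: starts at `u`, follows the `Q`-steps, and terminates
when `π(n v) < π(v)` and `e v ∉ lam`. -/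
def IsQPath (lam : ℕ → ℕ) (π : Cell → ℕ) (u : Cell) (P : List Cell) : Prop :=
  P ≠ [] ∧ (∀ v ∈ P, v ∈ cells lam) ∧ hd P = u ∧ List.Chain' (QStep lam π) P ∧
    π (nC (lst P)) < π (lst P) ∧ eC (lst P) ∉ cells lam

/-- One NE step increases the content by exactly one. -/
lemma step_content {lam : ℕ → ℕ} {u v : Cell} (hu : u ∈ cells lam) (hv : v ∈ cells lam)
    (h : v = nC u ∨ v = eC u) : content v = content u + 1 := by
  obtain ⟨u1, u2⟩ := u; obtain ⟨v1, v2⟩ := v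
  simp only [cells, nC, eC, content, Set.mem_setOf_eq, Prod.mk.injEq, Prod.ext_iff] at *
  omega

/-- Along an NE path, the content is determined by the index. -/
lemma path_content_add {lam : ℕ → ℕ} {P : List Cell} (hc : ∀ u ∈ P, u ∈ cells lam)
    (hch : List.Chain' (fun u v => v = nC u ∨ v = eC u) P) :
    ∀ (d i : ℕ) (h : i + d < P.length),
      content (P[i + d]'h) = content (P[i]'(by omega)) + d := by
  have hstep : ∀ (i : ℕ) (h : i + 1 < P.length),
      content (P[i + 1]'h) = content (P[i]'(by omega)) + 1 := by
    intro i h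
    have hrel := List.isChain_iff_getElem.mp hch i (by omega)
    exact step_content (hc _ (List.getElem_mem _)) (hc _ (List.getElem_mem _)) hrel
  intro d
  induction d with
  | zero => intro i h; simp
  | succ n ih =>
    intro i h
    have h1 : i + n + 1 < P.length := by omega
    have e1 : content (P[i + (n + 1)]'h) = content (P[i + n]'(by omega)) + 1 := hstep (i + n) h1
    rw [e1, ih i (by omega)]
    push_cast; ring

/-- The content is injective along an NE path. -/
lemma content_inj {lam : ℕ → ℕ} {P : List Cell} (hc : ∀ u ∈ P, u ∈ cells lam)
    (hch : List.Chain' (fun u v => v = nC u ∨ v = eC u) P) :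
    ∀ {u w : Cell}, u ∈ P → w ∈ P → content u = content w → u = w := by
  have main : ∀ (i j : ℕ) (hi : i < P.length) (hj : j < P.length), i ≤ j →
      content (P[i]'hi) = content (P[j]'hj) → (P[i]'hi) = (P[j]'hj) := by
    intro i j hi hj hij hco
    rcases Nat.exists_eq_add_of_le hij with ⟨d, rfl⟩
    have := path_content_add hc hch d i (by omega)
    have hd0 : d = 0 := by omega
    subst hd0; rfl
  intro u w hu hw hco
  obtain ⟨i, hi, rfl⟩ := List.mem_iff_getElem.mp hu
  obtain ⟨j, hj, rfl⟩ := List.mem_iff_getElem.mp hw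
  rcases Nat.le_total i j with hij | hij
  · exact main i j hi hj hij hco
  · exact (main j i hj hi hij hco.symm).symm

/-- The predecessor of `v` along an NE path is `sC v` or `wC v`. -/
lemma pred_eq {lam : ℕ → ℕ} {v b : Cell} (hb : b ∈ cells lam) (hv : v ∈ cells lam)
    (h : v = nC b ∨ v = eC b) : b = sC v ∨ b = wC v := by
  obtain ⟨b1, b2⟩ := b; obtain ⟨v1, v2⟩ := v
  simp only [cells, nC, eC, sC, wC, Set.mem_setOf_eq, Prod.mk.injEq, Prod.ext_iff] at *
  omega

/-- The key contradiction: `v` cannot be entered from the west in `P` and from the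
south in `P'`. -/
lemma key_contra {lam : ℕ → ℕ} {π : Cell → ℕ} {P P' : List Cell}
    (hrpp : IsRPP lam (addPath π P)) (hcomp : Compatible lam π P')
    (hcellsP : ∀ u ∈ P, u ∈ cells lam) (hcellsP' : ∀ u ∈ P', u ∈ cells lam)
    (hch : List.Chain' (fun u v => v = nC u ∨ v = eC u) P)
    {v : Cell} (hv : v ∈ P) (hv' : v ∈ P')
    (hs : sC v ∈ P') (hw : wC v ∈ P) : False := by
  have hvc : v ∈ cells lam := hcellsP v hv
  have hsc : sC v ∈ cells lam := hcellsP' _ hs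
  have hnsv : nC (sC v) = v := by simp [nC, sC]
  have hπs : π (sC v) = π v := by
    have := hcomp.2 (sC v) hs (by rw [hnsv]; exact hv')
    rw [hnsv] at this; exact this.symm
  have hsnP : sC v ∉ P := by
    intro hmem
    have hwc : wC v ∈ cells lam := hcellsP _ hw
    have hcon : content (sC v) = content (wC v) := by
      obtain ⟨v1, v2⟩ := v
      simp only [cells, sC, wC, content, Set.mem_setOf_eq] at *
      omega
    have := content_inj hcellsP hch hmem hw hcon
    simp only [sC, wC, Prod.mk.injEq, Prod.ext_iff] at this
    omega
  have hle := hrpp.2.2 v hvc hsc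
  simp only [addPath, if_pos hv, if_neg hsnP] at hle
  omega

/-- Uniqueness of the insertion path. -/
theorem insertPath_unique (lam : ℕ → ℕ) (hlam : IsPartition lam)
    (π : Cell → ℕ) (hπ : IsRPP lam π) (h : List Cell) (hh : IsRimHook lam h)
    (P P' : List Cell) (h1 : InsertPath lam π h P) (h2 : InsertPath lam π h P') :
    P = P' := by
  obtain ⟨⟨hne, hcells, hch⟩, hcomp, hlst, hlen, hrpp⟩ := h1
  obtain ⟨⟨hne', hcells', hch'⟩, hcomp', hlst', hlen', hrpp'⟩ := h2
  have hpos : 0 < P.length := List.length_pos_iff.mpr hne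
  have hpos' : 0 < P'.length := List.length_pos_iff.mpr hne'
  have hL : P.length = P'.length := by
    unfold len at hlen hlen'; omega
  -- chains on the reversed paths
  have hchR : List.Chain' (fun a b => a = nC b ∨ a = eC b) P.reverse :=
    List.isChain_reverse.mpr hch
  have hchR' : List.Chain' (fun a b => a = nC b ∨ a = eC b) P'.reverse :=
    List.isChain_reverse.mpr hch'
  -- last cells agree
  have hlast : P.getLast hne = P'.getLast hne' := by
    have e1 : lst P = P.getLast hne := by
      rw [lst, List.getLastD_eq_getLast?, List.getLast?_eq_getLast hne]; rfl
    have e2 : lst P' = P'.getLast hne' := by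
      rw [lst, List.getLastD_eq_getLast?, List.getLast?_eq_getLast hne']; rfl
    rw [← e1, ← e2, hlst, hlst']
  have claim : ∀ (i : ℕ) (h1 : i < P.reverse.length) (h2 : i < P'.reverse.length),
      P.reverse[i] = P'.reverse[i] := by
    intro i
    induction i with
    | zero =>
      intro h1 h2
      rw [List.getElem_reverse, List.getElem_reverse]
      simp only [Nat.sub_zero]
      rw [← List.getLast_eq_getElem hne, ← List.getLast_eq_getElem hne']
      exact hlast
    | succ n ih =>
      intro h1 h2
      have hn1 : n < P.reverse.length := by simp at h1 ⊢; omega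
      have hn2 : n < P'.reverse.length := by simp at h2 ⊢; omega
      have hv : P.reverse[n] = P'.reverse[n] := ih hn1 hn2
      set v : Cell := P.reverse[n] with hvdef
      set b : Cell := P.reverse[n + 1] with hbdef
      set b' : Cell := P'.reverse[n + 1] with hbdef'
      have hmemv : v ∈ P := List.mem_reverse.mp (hvdef ▸ List.getElem_mem hn1)
      have hmemv' : v ∈ P' := by
        rw [hv]; exact List.mem_reverse.mp (List.getElem_mem hn2)
      have hmemb : b ∈ P := List.mem_reverse.mp (hbdef ▸ List.getElem_mem h1)
      have hmemb' : b' ∈ P' := List.mem_reverse.mp (hbdef' ▸ List.getElem_mem h2)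
      have hrel : v = nC b ∨ v = eC b := by
        have := List.isChain_iff_getElem.mp hchR n (by simp at h1 ⊢; omega)
        simpa only [List.get_eq_getElem] using this
      have hrel' : v = nC b' ∨ v = eC b' := by
        have h5 := List.isChain_iff_getElem.mp hchR' n (by simp at h2 ⊢; omega)
        rw [← hv] at h5
        exact h5
      have hb : b = sC v ∨ b = wC v :=
        pred_eq (hcells b hmemb) (hcells v hmemv) hrel
      have hb' : b' = sC v ∨ b' = wC v :=
        pred_eq (hcells' b' hmemb') (hcells v hmemv) hrel'
      rcases hb with hb | hb <;> rcases hb' with hb' | hb'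
      · rw [hb, hb']
      · exact absurd (key_contra hrpp' hcomp hcells' hcells hch' hmemv' hmemv
          (hb ▸ hmemb) (hb' ▸ hmemb')) (by simp)
      · exact absurd (key_contra hrpp hcomp' hcells hcells' hch hmemv hmemv'
          (hb' ▸ hmemb') (hb ▸ hmemb)) (by simp)
      · rw [hb, hb']
  have : P.reverse = P'.reverse :=
    List.ext_getElem (by simpa using hL) claim
  exact List.reverse_injective this
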